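/- Let K be a standard bilinear Calderón–Zygmund kernel on ℝⁿ with exponent α ∈ (0,1] and constant C_K. Let J and K' be cubes with K' ⊂ J, ℓ(J) ≥ 4ℓ(K'), and d(K', ℝⁿ∖J) ≥ ℓ(K')^{1/2} ℓ(J)^{1/2} (ℓ^∞ distance). Let s be a measurable function supported in ℝⁿ∖J with |s| ≤ |J|^{−1/2} almost everywhere, and let h_{K'} be a cancellative Haar function of K' with center c_{K'}. Then the integral ∭ (K(x,y,z) − K(c_{K'},y,z)) s(y) 1_J(z) h_{K'}(x) dy dz dx (over x ∈ K') converges absolutely and |∭ (K(x,y,z) − K(c_{K'},y,z)) s(y) 1_J(z) h_{K'}(x) dy dz dx| ≤ C(n,α) C_K |K'|^{1/2} |J|^{−1/2} (ℓ(K')/ℓ(J))^{α/2}. -/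

import Mathlib

open MeasureTheory Set
open scoped ENNReal NNReal Classical

noncomputable section

namespace Bilinear

/-- Points of `ℝⁿ`, equipped with the `ℓ^∞` (sup) metric. -/
abbrev E (n : ℕ) : Type := Fin n → ℝ

/-- An axis-parallel cube in `ℝⁿ`, described by its lower corner and its side length. -/
structure Cube (n : ℕ) where
  corner : Fin n → ℝ
  side : ℝ
  side_pos : 0 < side

namespace Cube

variable {n : ℕ}

/-- The (half-open) cube as a subset of `ℝⁿ`. -/
def set (Q : Cube n) : Set (E n) :=
  {x | ∀ i, Q.corner i ≤ x i ∧ x i < Q.corner i + Q.side}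

/-- The closed cube as a subset of `ℝⁿ`. -/
def clSet (Q : Cube n) : Set (E n) :=
  {x | ∀ i, Q.corner i ≤ x i ∧ x i ≤ Q.corner i + Q.side}

/-- The volume `|Q| = ℓ(Q)ⁿ` of a cube. -/
def vol (Q : Cube n) : ℝ := Q.side ^ n

/-- The center of a cube. -/
def center (Q : Cube n) : E n := fun i => Q.corner i + Q.side / 2

/-- The concentric dilate `cQ` of a cube (defined for `c ≥ 1`; junk otherwise). -/
def dilate (Q : Cube n) (c : ℝ) : Cube n where
  corner := fun i => Q.corner i + Q.side / 2 - max c 1 * Q.side / 2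
  side := max c 1 * Q.side
  side_pos := mul_pos (lt_of_lt_of_le one_pos (le_max_right c 1)) Q.side_pos

end Cube

/-- The (`ℓ^∞`) distance between two sets of `ℝⁿ`. -/
def setDist {n : ℕ} (s t : Set (E n)) : ℝ := sInf (Set.image2 dist s t)

/-- The (`ℓ^∞`) distance between two cubes. -/
def cubeDist {n : ℕ} (Q R : Cube n) : ℝ := setDist Q.clSet R.clSet

/-- The indicator function `1_Q` of a cube, as a complex-valued function. -/
def indC {n : ℕ} (Q : Cube n) : E n → ℂ := fun x => if x ∈ Q.set then 1 else 0

/-- The average `⟨|f|⟩_Q` of `|f|` over a cube. -/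
def avgAbs {n : ℕ} (Q : Cube n) (f : E n → ℂ) : ℝ := Q.vol⁻¹ * ∫ x in Q.set, ‖f x‖

/-- The average `⟨f⟩_Q` of `f` over a cube. -/
def avg {n : ℕ} (Q : Cube n) (f : E n → ℂ) : ℂ := (Q.vol : ℂ)⁻¹ * ∫ x in Q.set, f x

/-- The `L^p` norm (`p` a real exponent) of `f : ℝⁿ → ℂ`. -/
def lpNorm {n : ℕ} (f : E n → ℂ) (p : ℝ) : ℝ := (eLpNorm f (ENNReal.ofReal p) volume).toReal

/-- `f` is bounded, measurable and compactly supported. -/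
def BddCompactSupp {n : ℕ} (f : E n → ℂ) : Prop :=
  Measurable f ∧ HasCompactSupport f ∧ ∃ M : ℝ, ∀ x, ‖f x‖ ≤ M

/-- The pairing `⟨f, g⟩ = ∫ f g`. -/
def pairing {n : ℕ} (f g : E n → ℂ) : ℂ := ∫ x, f x * g x

/-! ### Random dyadic grids -/

/-- The translation `Σ_{j : 2^{-j} < 2^{-k}} 2^{-j} ω^j` of the grid of scale `2^{-k}`. -/
def gridShift {n : ℕ} (ω : ℤ → Fin n → Bool) (k : ℤ) (i : Fin n) : ℝ :=
  ∑' j : {j : ℤ // k < j}, (2 : ℝ) ^ (-(j.1)) * (if ω j.1 i then 1 else 0)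

/-- The shifted dyadic grid `𝒟_ω = {I + ω : I ∈ 𝒟₀}`. -/
def dyadicGrid {n : ℕ} (ω : ℤ → Fin n → Bool) : Set (Cube n) :=
  {Q | ∃ (k : ℤ) (m : Fin n → ℤ), Q.side = (2 : ℝ) ^ (-k) ∧
    ∀ i, Q.corner i = (m i : ℝ) * (2 : ℝ) ^ (-k) + gridShift ω k i}

/-- A dyadic grid is a translate-type grid `𝒟_ω` of the standard grid. -/
def IsDyadicGrid {n : ℕ} (𝒟 : Set (Cube n)) : Prop := ∃ ω, 𝒟 = dyadicGrid ω

/-- A grid has no quadrants if every strictly increasing chain of cubes exhausts `ℝⁿ`;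
equivalently, every cube of the grid and every point are contained in a common bigger
grid cube. -/
def NoQuadrants {n : ℕ} (𝒟 : Set (Cube n)) : Prop :=
  ∀ Q ∈ 𝒟, ∀ x : E n, ∃ R ∈ 𝒟, Q.set ⊆ R.set ∧ x ∈ R.set

/-- A cube `I` of a grid `𝒟` is good (with parameters `r, γ`) if for every `J ∈ 𝒟` with
`ℓ(J) ≥ 2^r ℓ(I)` one has `d(I, ∂J) > ℓ(I)^γ ℓ(J)^(1-γ)`. -/
def IsGood {n : ℕ} (𝒟 : Set (Cube n)) (r : ℕ) (γ : ℝ) (I : Cube n) : Prop :=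
  ∀ J ∈ 𝒟, (2 : ℝ) ^ r * I.side ≤ J.side →
    I.side ^ γ * J.side ^ (1 - γ) < setDist I.clSet (frontier J.set)

/-! ### Haar functions -/

/-- One-dimensional Haar functions on the interval `[a, a+l)`:
noncancellative (`e = false`) and cancellative (`e = true`). -/
def haar1 (a l : ℝ) (e : Bool) (t : ℝ) : ℝ :=
  if a ≤ t ∧ t < a + l then
    if e then (if t < a + l / 2 then l ^ (-(1 : ℝ) / 2) else -(l ^ (-(1 : ℝ) / 2)))
    else l ^ (-(1 : ℝ) / 2)
  else 0

/-- The Haar function `h_Q^η` of a cube `Q ⊂ ℝⁿ`. It is cancellative iff `η ≠ 0`. -/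
def haar {n : ℕ} (Q : Cube n) (η : Fin n → Bool) : E n → ℝ :=
  fun x => ∏ i, haar1 (Q.corner i) Q.side (η i) (x i)

/-- The pairing `⟨f, h_Q^η⟩`. -/
def haarPairing {n : ℕ} (f : E n → ℂ) (Q : Cube n) (η : Fin n → Bool) : ℂ :=
  ∫ x, f x * (haar Q η x : ℂ)

/-! ### Bilinear Calderón–Zygmund kernels and truncated operators -/


/-- `K` is a (measurable) standard bilinear Calderón–Zygmund kernel on `ℝⁿ` with Hölder
exponent `α` and constant `C`: size bound and Hölder bounds in each of the three
variables, away from the diagonal `Δ = {x = y = z}`. -/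
def CZBounds (n : ℕ) (α : ℝ) (K : E n → E n → E n → ℂ) (C : ℝ) : Prop :=
  Measurable (fun p : E n × E n × E n => K p.1 p.2.1 p.2.2) ∧
  (∀ x y z : E n, ¬(x = y ∧ y = z) →
    ‖K x y z‖ ≤ C / (dist x y + dist x z) ^ (2 * n)) ∧
  (∀ x x' y z : E n, ¬(x = y ∧ y = z) → ¬(x' = y ∧ y = z) →
    dist x x' ≤ max (dist x y) (dist x z) / 2 →
    ‖K x y z - K x' y z‖ ≤ C * dist x x' ^ α / (dist x y + dist x z) ^ (2 * (n : ℝ) + α)) ∧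
  (∀ x y y' z : E n, ¬(x = y ∧ y = z) → ¬(x = y' ∧ y' = z) →
    dist y y' ≤ max (dist x y) (dist x z) / 2 →
    ‖K x y z - K x y' z‖ ≤ C * dist y y' ^ α / (dist x y + dist x z) ^ (2 * (n : ℝ) + α)) ∧
  (∀ x y z z' : E n, ¬(x = y ∧ y = z) → ¬(x = y ∧ y = z') →
    dist z z' ≤ max (dist x y) (dist x z) / 2 →
    ‖K x y z - K x y z'‖ ≤ C * dist z z' ^ α / (dist x y + dist x z) ^ (2 * (n : ℝ) + α))

/-- The truncated bilinear singular integral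
`T_ε(f,g)(x) = ∬_{max(|x-y|,|x-z|) > ε} K(x,y,z) f(y) g(z) dy dz`. -/
def truncT {n : ℕ} (K : E n → E n → E n → ℂ) (ε : ℝ) (f g : E n → ℂ) (x : E n) : ℂ :=
  ∫ y, ∫ z, if ε < max (dist x y) (dist x z) then K x y z * f y * g z else 0

/-- The class `𝒜` of smooth truncation profiles: smooth `φ` with values in `[0,1]`,
vanishing on `[0,1/2]`, equal to `1` on `[1,∞)`, and `‖φ'‖_∞ ≤ 10`. -/
def memA (φ : ℝ → ℝ) : Prop :=
  ContDiff ℝ (⊤ : ℕ∞) φ ∧ (∀ t, φ t ∈ Set.Icc (0 : ℝ) 1) ∧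
    (∀ t ≤ (1 : ℝ) / 2, φ t = 0) ∧ (∀ t, (1 : ℝ) ≤ t → φ t = 1) ∧ ∀ t, |deriv φ t| ≤ 10

/-- The smoothly truncated kernel `K_ε^φ(x,y,z) = K(x,y,z) φ((|x-y|+|x-z|)/ε)`. -/
def smoothK {n : ℕ} (K : E n → E n → E n → ℂ) (φ : ℝ → ℝ) (ε : ℝ) :
    E n → E n → E n → ℂ :=
  fun x y z => K x y z * ((φ ((dist x y + dist x z) / ε) : ℝ) : ℂ)

/-- The smoothly truncated operator `T_ε^φ(f,g)(x) = ∬ K_ε^φ(x,y,z) f(y) g(z) dy dz`. -/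
def smoothT {n : ℕ} (K : E n → E n → E n → ℂ) (φ : ℝ → ℝ) (ε : ℝ) (f g : E n → ℂ)
    (x : E n) : ℂ :=
  ∫ y, ∫ z, smoothK K φ ε x y z * f y * g z

/-- The first adjoint kernel, `K^{1*}(x,y,z) = K(y,x,z)`. -/
def adj1 {n : ℕ} (K : E n → E n → E n → ℂ) : E n → E n → E n → ℂ := fun x y z => K y x z

/-- The second adjoint kernel, `K^{2*}(x,y,z) = K(z,y,x)`. -/
def adj2 {n : ℕ} (K : E n → E n → E n → ℂ) : E n → E n → E n → ℂ := fun x y z => K z y x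

/-- `C` is a weak boundedness constant of the bilinear operator `T`:
`|⟨T(1_I,1_I), 1_I⟩| ≤ C |I|` for all cubes `I ⊂ ℝⁿ`. -/
def WBPBound {n : ℕ} (T : (E n → ℂ) → (E n → ℂ) → E n → ℂ) (C : ℝ) : Prop :=
  ∀ Q : Cube n, ‖∫ x in Q.set, T (indC Q) (indC Q) x‖ ≤ C * Q.vol

/-! ### The `BMO` pairings `⟨T_ε(1,1), φ₀⟩` and testing conditions -/

/-- The pairing `⟨T_ε(1,1), φ₀⟩`, defined (for `φ₀` supported in the cube `R`, with mean
zero, and `c ≥ 3` a dilation factor) as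
`⟨T_ε(1_{cR},1_{cR}), φ₀⟩ + ∭ (K(x,y,z) - K(c_R,y,z)) 1_{(cR×cR)ᶜ}(y,z) φ₀(x) dy dz dx`. -/
def bmoPairing {n : ℕ} (K : E n → E n → E n → ℂ) (ε : ℝ) (φ₀ : E n → ℂ) (R : Cube n)
    (c : ℝ) : ℂ :=
  (∫ x, truncT K ε (indC (R.dilate c)) (indC (R.dilate c)) x * φ₀ x) +
    ∫ x, φ₀ x * ∫ y, ∫ z,
      if y ∈ (R.dilate c).set ∧ z ∈ (R.dilate c).set then 0
      else K x y z - K R.center y z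

/-- The pairing `⟨T_ε^{1*}(1,1), φ₀⟩ = ⟨T_ε(φ₀, 1_{cR}), 1_{cR}⟩ + (correction with K^{1*})`. -/
def bmoPairing1 {n : ℕ} (K : E n → E n → E n → ℂ) (ε : ℝ) (φ₀ : E n → ℂ) (R : Cube n)
    (c : ℝ) : ℂ :=
  (∫ x, truncT K ε φ₀ (indC (R.dilate c)) x * indC (R.dilate c) x) +
    ∫ x, φ₀ x * ∫ y, ∫ z,
      if y ∈ (R.dilate c).set ∧ z ∈ (R.dilate c).set then 0
      else adj1 K x y z - adj1 K R.center y z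

/-- The pairing `⟨T_ε^{2*}(1,1), φ₀⟩ = ⟨T_ε(1_{cR}, φ₀), 1_{cR}⟩ + (correction with K^{2*})`. -/
def bmoPairing2 {n : ℕ} (K : E n → E n → E n → ℂ) (ε : ℝ) (φ₀ : E n → ℂ) (R : Cube n)
    (c : ℝ) : ℂ :=
  (∫ x, truncT K ε (indC (R.dilate c)) φ₀ x * indC (R.dilate c) x) +
    ∫ x, φ₀ x * ∫ y, ∫ z,
      if y ∈ (R.dilate c).set ∧ z ∈ (R.dilate c).set then 0
      else adj2 K x y z - adj2 K R.center y z

/-- `B` is an admissible `BMO` bound for `T_ε(1,1)`: `|⟨T_ε(1,1), φ₀⟩| ≤ B |R|`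
over all admissible testing data. -/
def BMOBound {n : ℕ} (K : E n → E n → E n → ℂ) (ε : ℝ) (B : ℝ) : Prop :=
  ∀ (R : Cube n) (φ₀ : E n → ℂ), Measurable φ₀ → Function.support φ₀ ⊆ R.clSet →
    (∀ x, ‖φ₀ x‖ ≤ 1) → (∫ x, φ₀ x) = 0 →
    ∀ c : ℝ, 3 ≤ c → ε < 2⁻¹ * (c - 1) * R.side →
      ‖bmoPairing K ε φ₀ R c‖ ≤ B * R.vol

/-- `B` is an admissible `BMO` bound for `T_ε^{1*}(1,1)`. -/
def BMOBound1 {n : ℕ} (K : E n → E n → E n → ℂ) (ε : ℝ) (B : ℝ) : Prop :=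
  ∀ (R : Cube n) (φ₀ : E n → ℂ), Measurable φ₀ → Function.support φ₀ ⊆ R.clSet →
    (∀ x, ‖φ₀ x‖ ≤ 1) → (∫ x, φ₀ x) = 0 →
    ∀ c : ℝ, 3 ≤ c → ε < 2⁻¹ * (c - 1) * R.side →
      ‖bmoPairing1 K ε φ₀ R c‖ ≤ B * R.vol

/-- `B` is an admissible `BMO` bound for `T_ε^{2*}(1,1)`. -/
def BMOBound2 {n : ℕ} (K : E n → E n → E n → ℂ) (ε : ℝ) (B : ℝ) : Prop :=
  ∀ (R : Cube n) (φ₀ : E n → ℂ), Measurable φ₀ → Function.support φ₀ ⊆ R.clSet →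
    (∀ x, ‖φ₀ x‖ ≤ 1) → (∫ x, φ₀ x) = 0 →
    ∀ c : ℝ, 3 ≤ c → ε < 2⁻¹ * (c - 1) * R.side →
      ‖bmoPairing2 K ε φ₀ R c‖ ≤ B * R.vol

/-! ### Sparse collections -/

/-- A collection `𝒮` of cubes is `η`-sparse: every `Q ∈ 𝒮` carries a major measurable
subset `E_Q ⊆ Q` with `|E_Q| > η |Q|`, the sets `E_Q` being pairwise disjoint. -/
def IsSparse {n : ℕ} (η : ℝ) (𝒮 : Set (Cube n)) : Prop :=
  ∃ Esel : Cube n → Set (E n),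
    (∀ Q ∈ 𝒮, MeasurableSet (Esel Q) ∧ Esel Q ⊆ Q.set ∧
      ENNReal.ofReal (η * Q.vol) < MeasureTheory.volume (Esel Q)) ∧
    𝒮.Pairwise fun Q R => Disjoint (Esel Q) (Esel R)

/-- The sparse form `Λ_𝒮(f₁,f₂,f₃) = Σ_{Q ∈ 𝒮} |Q| ⟨|f₁|⟩_Q ⟨|f₂|⟩_Q ⟨|f₃|⟩_Q`. -/
def sparseForm {n : ℕ} (𝒮 : Set (Cube n)) (f₁ f₂ f₃ : E n → ℂ) : ℝ :=
  ∑' Q : 𝒮, (Q : Cube n).vol * avgAbs Q f₁ * avgAbs Q f₂ * avgAbs Q f₃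

/-! ### Bilinear dyadic shifts and paraproducts, as trilinear forms -/

/-- A trilinear form on functions on `ℝⁿ`. -/
abbrev TriForm (n : ℕ) : Type := (E n → ℂ) → (E n → ℂ) → (E n → ℂ) → ℂ

/-- The index set of a bilinear dyadic shift of complexity `(i,j,k)` in the grid `𝒟`:
tuples of cubes `I, J, K ⊆ Q` of `𝒟` with `ℓ(I) = 2^{-i} ℓ(Q)`, `ℓ(J) = 2^{-j} ℓ(Q)`,
`ℓ(K) = 2^{-k} ℓ(Q)`, together with Haar signatures, `h_K` being cancellative and at most
one of `h_I, h_J` being noncancellative. -/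
structure ShiftIndex (n : ℕ) (𝒟 : Set (Cube n)) (i j k : ℕ) where
  Q : Cube n
  I : Cube n
  J : Cube n
  K : Cube n
  ηf : Fin n → Bool
  ηg : Fin n → Bool
  ηh : Fin n → Bool
  memQ : Q ∈ 𝒟
  memI : I ∈ 𝒟
  memJ : J ∈ 𝒟
  memK : K ∈ 𝒟
  subI : I.set ⊆ Q.set
  subJ : J.set ⊆ Q.set
  subK : K.set ⊆ Q.set
  sideI : I.side = Q.side / 2 ^ i
  sideJ : J.side = Q.side / 2 ^ j
  sideK : K.side = Q.side / 2 ^ k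
  cancel_h : ηh ≠ fun _ => false
  cancel_fg : ¬(ηf = (fun _ => false) ∧ ηg = (fun _ => false))

/-- `Λ` is (the trilinear form of) a cancellative bilinear dyadic shift of complexity
`(i,j,k)` in the grid `𝒟`: `Λ(f,g,h) = Σ α_{I,J,K,Q} ⟨f, h̃_I⟩ ⟨g, h̃_J⟩ ⟨h, h_K⟩`
with `|α_{I,J,K,Q}| ≤ |I|^{1/2} |J|^{1/2} |K|^{1/2} / |Q|²`. -/
def IsShiftForm {n : ℕ} (𝒟 : Set (Cube n)) (i j k : ℕ) (Λ : TriForm n) : Prop :=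
  ∃ α : ShiftIndex n 𝒟 i j k → ℂ,
    (∀ t, ‖α t‖ ≤ Real.sqrt (t.I.vol * t.J.vol * t.K.vol) / t.Q.vol ^ 2) ∧
    ∀ f g h, Λ f g h =
      ∑' t : ShiftIndex n 𝒟 i j k,
        α t * haarPairing f t.I t.ηf * haarPairing g t.J t.ηg * haarPairing h t.K t.ηh

/-- `Λ` is a cancellative bilinear shift of complexity `(i,i,k)` or `(i,i+1,k)` in `𝒟`,
or an adjoint (`⟨S^{1*}(f,g),h⟩ = ⟨S(h,g),f⟩`, `⟨S^{2*}(f,g),h⟩ = ⟨S(f,h),g⟩`) of such. -/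
def IsExtShiftForm {n : ℕ} (𝒟 : Set (Cube n)) (i k : ℕ) (Λ : TriForm n) : Prop :=
  ∃ Λ₀ : TriForm n, (IsShiftForm 𝒟 i i k Λ₀ ∨ IsShiftForm 𝒟 i (i + 1) k Λ₀) ∧
    ((∀ f g h, Λ f g h = Λ₀ f g h) ∨ (∀ f g h, Λ f g h = Λ₀ h g f) ∨
      (∀ f g h, Λ f g h = Λ₀ f h g))

/-- The index set of a bilinear paraproduct in the grid `𝒟`: cubes `K ∈ 𝒟` with a
cancellative Haar signature. -/
structure ParaIndex (n : ℕ) (𝒟 : Set (Cube n)) where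
  K : Cube n
  η : Fin n → Bool
  mem : K ∈ 𝒟
  cancel : η ≠ fun _ => false

/-- `Λ` is (the trilinear form of) a bilinear paraproduct
`Π_β(f,g) = Σ_K β_K ⟨f⟩_K ⟨g⟩_K h_K` in the grid `𝒟`, with coefficients satisfying the
Carleson normalization `Σ_{K ⊆ K₀} |β_K|² ≤ |K₀|` for all `K₀ ∈ 𝒟`. -/
def IsParaForm {n : ℕ} (𝒟 : Set (Cube n)) (Λ : TriForm n) : Prop :=
  ∃ β : ParaIndex n 𝒟 → ℂ,
    (∀ K₀ ∈ 𝒟, (∑' t : {t : ParaIndex n 𝒟 // t.K.set ⊆ K₀.set},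
        ((‖β t.1‖₊ : ℝ≥0∞) ^ 2)) ≤ ENNReal.ofReal K₀.vol) ∧
    ∀ f g h, Λ f g h =
      ∑' t : ParaIndex n 𝒟, β t * avg t.K f * avg t.K g * haarPairing h t.K t.η

section Helpers

variable {n : ℕ}

lemma measurable_haar1 (a l : ℝ) (e : Bool) : Measurable (haar1 a l e) := by
  unfold haar1
  have h1 : MeasurableSet {t : ℝ | a ≤ t ∧ t < a + l} := by
    have : {t : ℝ | a ≤ t ∧ t < a + l} = Set.Ico a (a + l) := rfl
    rw [this]; exact measurableSet_Ico
  refine Measurable.ite h1 ?_ measurable_const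
  cases e
  · simp only [Bool.false_eq_true, if_false]; exact measurable_const
  · simp only [if_true]
    exact Measurable.ite measurableSet_Iio measurable_const measurable_const

lemma measurable_haar (Q : Cube n) (η : Fin n → Bool) : Measurable (haar Q η) := by
  unfold haar
  exact Finset.measurable_prod _ fun i _ =>
    (measurable_haar1 _ _ _).comp (measurable_pi_apply i)

lemma cube_set_eq (Q : Cube n) :
    Q.set = Set.pi Set.univ (fun i => Set.Ico (Q.corner i) (Q.corner i + Q.side)) := by
  ext x; simp [Cube.set, Set.mem_pi, Set.mem_Ico]

lemma measurableSet_cube (Q : Cube n) : MeasurableSet Q.set := by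
  rw [cube_set_eq]; exact MeasurableSet.univ_pi fun i => measurableSet_Ico

lemma volume_cube (Q : Cube n) : volume Q.set = ENNReal.ofReal Q.vol := by
  rw [cube_set_eq, volume_pi_pi]
  simp only [Real.volume_Ico, add_sub_cancel_left]
  rw [Finset.prod_const, Cube.vol, ← ENNReal.ofReal_pow Q.side_pos.le]
  simp

lemma abs_haar_le (Q : Cube n) (η : Fin n → Bool) (x : E n) :
    |haar Q η x| ≤ Set.indicator Q.set (fun _ => (Q.side ^ (-(1:ℝ)/2)) ^ n) x := by
  have hb : (0:ℝ) ≤ Q.side ^ (-(1:ℝ)/2) := Real.rpow_nonneg Q.side_pos.le _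
  by_cases hx : x ∈ Q.set
  · rw [Set.indicator_of_mem hx, haar, Finset.abs_prod]
    calc ∏ i, |haar1 (Q.corner i) Q.side (η i) (x i)|
        ≤ ∏ _i : Fin n, Q.side ^ (-(1:ℝ)/2) := by
          refine Finset.prod_le_prod (fun i _ => abs_nonneg _) fun i _ => ?_
          have hxi := hx i
          unfold haar1
          rw [if_pos hxi]
          split_ifs <;> simp [abs_of_nonneg hb, hb]
      _ = (Q.side ^ (-(1:ℝ)/2)) ^ n := by
          rw [Finset.prod_const, Finset.card_univ, Fintype.card_fin]
  · rw [Set.indicator_of_notMem hx]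
    have : haar Q η x = 0 := by
      simp only [Cube.set, Set.mem_setOf_eq, not_forall] at hx
      obtain ⟨i, hi⟩ := hx
      refine Finset.prod_eq_zero (Finset.mem_univ i) ?_
      unfold haar1
      rw [if_neg]
      intro h; exact hi ⟨h.1, h.2⟩
    rw [this]; simp

lemma haar_eq_zero_of_not_mem (Q : Cube n) (η : Fin n → Bool) {x : E n} (hx : x ∉ Q.set) :
    haar Q η x = 0 := by
  have := abs_haar_le Q η x
  rw [Set.indicator_of_notMem hx] at this
  exact abs_eq_zero.mp (le_antisymm this (abs_nonneg _))

end Helpers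

section Helpers2

variable {n : ℕ}

lemma scale_integral (g : E n → ℝ) (hg : Integrable g) {a : ℝ} (ha : 0 < a) (c : E n) :
    Integrable (fun y : E n => g (a⁻¹ • (y - c))) ∧
    ∫ y : E n, g (a⁻¹ • (y - c)) = a ^ n * ∫ w, g w := by
  have h1 : Integrable (fun x : E n => g (a⁻¹ • x)) :=
    (integrable_comp_smul_iff volume g (inv_ne_zero ha.ne')).2 hg
  constructor
  · exact h1.comp_sub_right c
  · calc ∫ y : E n, g (a⁻¹ • (y - c)) = ∫ x : E n, g (a⁻¹ • x) :=
        integral_sub_right_eq_self (fun x => g (a⁻¹ • x)) c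
      _ = a ^ n * ∫ w, g w := by
        rw [Measure.integral_comp_inv_smul_of_nonneg volume g ha.le, Module.finrank_fin_fun,
          smul_eq_mul]

lemma inner_z_integral {p : ℝ} (hp : (n:ℝ) < p) (c : E n) {a : ℝ} (ha : 0 < a) :
    Integrable (fun z : E n => (a + dist c z) ^ (-p)) ∧
    ∫ z : E n, (a + dist c z) ^ (-p)
      = a ^ ((n:ℝ) - p) * ∫ w : E n, (1 + ‖w‖) ^ (-p) := by
  set g : E n → ℝ := fun w => (1 + ‖w‖) ^ (-p) with hgdef
  have hg : Integrable g :=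
    integrable_one_add_norm (by rw [Module.finrank_fin_fun]; exact hp)
  have key : ∀ z : E n, (a + dist c z) ^ (-p) = a ^ (-p) * g (a⁻¹ • (z - c)) := by
    intro z
    have h1 : ‖a⁻¹ • (z - c)‖ = a⁻¹ * ‖z - c‖ := by
      rw [norm_smul, Real.norm_eq_abs, abs_of_pos (inv_pos.2 ha)]
    have h2 : a + dist c z = a * (1 + ‖a⁻¹ • (z - c)‖) := by
      rw [h1, dist_comm, dist_eq_norm]
      field_simp
    rw [h2, Real.mul_rpow ha.le (by positivity), hgdef]
  obtain ⟨hint, heq⟩ := scale_integral g hg ha c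
  constructor
  · simp only [key]
    exact hint.const_mul _
  · simp only [key]
    rw [MeasureTheory.integral_const_mul, heq, ← mul_assoc, ← Real.rpow_natCast a n, ← Real.rpow_add ha]
    ring_nf

lemma integrable_tail {q : ℝ} (hq : (n:ℝ) < q) :
    Integrable (fun u : E n => if (1:ℝ) ≤ ‖u‖ then ‖u‖ ^ (-q) else 0) := by
  have hg : Integrable (fun w : E n => (1 + ‖w‖) ^ (-q)) :=
    integrable_one_add_norm (by rw [Module.finrank_fin_fun]; exact hq)
  have hq0 : 0 < q := lt_of_le_of_lt (Nat.cast_nonneg n) hq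
  refine (hg.const_mul ((2:ℝ) ^ q)).mono' ?_ ?_
  · apply Measurable.aestronglyMeasurable
    have hms : MeasurableSet {u : E n | (1:ℝ) ≤ ‖u‖} :=
      measurableSet_le measurable_const measurable_norm
    exact Measurable.ite hms (by fun_prop) measurable_const
  · refine Filter.Eventually.of_forall fun u => ?_
    by_cases h : (1:ℝ) ≤ ‖u‖
    · rw [if_pos h, Real.norm_eq_abs, abs_of_nonneg (Real.rpow_nonneg (norm_nonneg u) _)]
      have hu0 : (0:ℝ) < ‖u‖ := lt_of_lt_of_le one_pos h
      have h2 : (1 + ‖u‖) ^ q ≤ (2:ℝ) ^ q * ‖u‖ ^ q := by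
        rw [← Real.mul_rpow (by norm_num) (norm_nonneg u)]
        exact Real.rpow_le_rpow (by positivity) (by linarith) hq0.le
      rw [Real.rpow_neg (norm_nonneg u), Real.rpow_neg (by positivity : (0:ℝ) ≤ 1 + ‖u‖)]
      calc (‖u‖ ^ q)⁻¹ = (2:ℝ) ^ q * ((2:ℝ) ^ q * ‖u‖ ^ q)⁻¹ := by
            have h4 : (0:ℝ) < ‖u‖ ^ q := Real.rpow_pos_of_pos hu0 _
            have h5 : (0:ℝ) < (2:ℝ) ^ q := Real.rpow_pos_of_pos (by norm_num) _
            field_simp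
        _ ≤ (2:ℝ) ^ q * ((1 + ‖u‖) ^ q)⁻¹ := by
            gcongr
    · rw [if_neg h]
      simp only [norm_zero]
      positivity

lemma tail_integral {q : ℝ} (hq : (n:ℝ) < q) (c : E n) {D : ℝ} (hD : 0 < D) :
    Integrable (fun y : E n => if D ≤ dist c y then dist c y ^ (-q) else 0) ∧
    ∫ y : E n, (if D ≤ dist c y then dist c y ^ (-q) else 0)
      = D ^ ((n:ℝ) - q) * ∫ u : E n, (if (1:ℝ) ≤ ‖u‖ then ‖u‖ ^ (-q) else 0) := by
  set g : E n → ℝ := fun u => if (1:ℝ) ≤ ‖u‖ then ‖u‖ ^ (-q) else 0 with hgdef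
  have hg : Integrable g := integrable_tail hq
  have key : ∀ y : E n, (if D ≤ dist c y then dist c y ^ (-q) else 0)
      = D ^ (-q) * g (D⁻¹ • (y - c)) := by
    intro y
    have h1 : ‖D⁻¹ • (y - c)‖ = D⁻¹ * ‖y - c‖ := by
      rw [norm_smul, Real.norm_eq_abs, abs_of_pos (inv_pos.2 hD)]
    have hdy : dist c y = ‖y - c‖ := by rw [dist_comm, dist_eq_norm]
    have hcond : ((1:ℝ) ≤ ‖D⁻¹ • (y - c)‖) ↔ D ≤ ‖y - c‖ := by
      rw [h1, le_inv_mul_iff₀ hD, mul_one]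
    rw [hgdef]
    simp only [hdy]
    by_cases h : D ≤ ‖y - c‖
    · rw [if_pos h, if_pos (hcond.mpr h), h1,
        Real.mul_rpow (inv_nonneg.2 hD.le) (norm_nonneg _), Real.inv_rpow hD.le]
      have hne : D ^ (-q) ≠ 0 := (Real.rpow_pos_of_pos hD _).ne'
      field_simp
    · rw [if_neg h, if_neg (fun hc => h (hcond.mp hc)), mul_zero]
  obtain ⟨hint, heq⟩ := scale_integral g hg hD c
  constructor
  · simp only [key]
    exact hint.const_mul _
  · simp only [key]
    rw [MeasureTheory.integral_const_mul, heq, ← mul_assoc, ← Real.rpow_natCast D n, ← Real.rpow_add hD]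
    ring_nf

end Helpers2

section Helpers3

variable {n : ℕ}

lemma psi_lemma {α : ℝ} (hα : 0 < α) (_hn : 0 < n) (c : E n) {D : ℝ} (hD : 0 < D) :
    Integrable (fun yz : E n × E n =>
      if D ≤ dist c yz.1 then (dist c yz.1 + dist c yz.2) ^ (-(2*(n:ℝ)+α)) else 0) ∧
    ∫ yz : E n × E n,
        (if D ≤ dist c yz.1 then (dist c yz.1 + dist c yz.2) ^ (-(2*(n:ℝ)+α)) else 0)
      = D ^ (-α) * ((∫ w : E n, (1 + ‖w‖) ^ (-(2*(n:ℝ)+α))) *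
          ∫ u : E n, (if (1:ℝ) ≤ ‖u‖ then ‖u‖ ^ (-((n:ℝ)+α)) else 0)) := by
  have hp : (n:ℝ) < 2*(n:ℝ)+α := by
    have : (0:ℝ) ≤ (n:ℝ) := Nat.cast_nonneg n
    linarith
  have hq : (n:ℝ) < (n:ℝ)+α := by linarith
  set p : ℝ := 2*(n:ℝ)+α with hpdef
  set A : ℝ := ∫ w : E n, (1 + ‖w‖) ^ (-p) with hAdef
  set B : ℝ := ∫ u : E n, (if (1:ℝ) ≤ ‖u‖ then ‖u‖ ^ (-((n:ℝ)+α)) else 0) with hBdef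
  set ψ : E n × E n → ℝ := fun yz =>
    if D ≤ dist c yz.1 then (dist c yz.1 + dist c yz.2) ^ (-p) else 0 with hψdef
  have hexp : (n:ℝ) - p = -((n:ℝ)+α) := by rw [hpdef]; ring
  have hmeas : AEStronglyMeasurable ψ ((volume : Measure (E n)).prod volume) := by
    apply Measurable.aestronglyMeasurable
    have hms : MeasurableSet {yz : E n × E n | D ≤ dist c yz.1} :=
      measurableSet_le measurable_const (measurable_const.dist measurable_fst)
    exact Measurable.ite hms (by fun_prop) measurable_const
  have h1 : ∀ y : E n, Integrable (fun z : E n => ψ (y, z)) := by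
    intro y
    by_cases h : D ≤ dist c y
    · simp only [hψdef, if_pos h]
      exact (inner_z_integral hp c (lt_of_lt_of_le hD h)).1
    · simp only [hψdef, if_neg h]
      exact integrable_zero _ _ _
  have h2' : ∀ y : E n, (∫ z : E n, ψ (y, z))
      = (if D ≤ dist c y then dist c y ^ (-((n:ℝ)+α)) else 0) * A := by
    intro y
    by_cases h : D ≤ dist c y
    · simp only [hψdef, if_pos h]
      rw [(inner_z_integral hp c (lt_of_lt_of_le hD h)).2, hexp]
    · simp only [hψdef, if_neg h]
      simp
  have h2 : ∀ y : E n, (∫ z : E n, ‖ψ (y, z)‖)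
      = (if D ≤ dist c y then dist c y ^ (-((n:ℝ)+α)) else 0) * A := by
    intro y
    have hnn : ∀ z : E n, ‖ψ (y, z)‖ = ψ (y, z) := by
      intro z
      rw [Real.norm_eq_abs, abs_of_nonneg]
      rw [hψdef]
      dsimp only
      split_ifs
      · exact Real.rpow_nonneg (by positivity) _
      · exact le_refl 0
    exact (integral_congr_ae (Filter.Eventually.of_forall fun z => hnn z)).trans (h2' y)
  have hFint := (tail_integral hq c hD).1
  have hFval := (tail_integral hq c hD).2
  have hψint : Integrable ψ ((volume : Measure (E n)).prod volume) := by
    refine (integrable_prod_iff hmeas).2 ⟨?_, ?_⟩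
    · exact Filter.Eventually.of_forall h1
    · simp only [h2]
      exact hFint.mul_const A
  have hvol : (volume : Measure (E n × E n)) = (volume : Measure (E n)).prod volume :=
    Measure.volume_eq_prod _ _
  constructor
  · rw [hvol]; exact hψint
  · rw [hvol, MeasureTheory.integral_prod _ hψint]
    simp only [h2']
    rw [MeasureTheory.integral_mul_const, hFval]
    have : (n:ℝ) - ((n:ℝ)+α) = -α := by ring
    rw [this]
    ring

end Helpers3

section Helpers4

variable {n : ℕ}

lemma measurable_indC (Q : Cube n) : Measurable (indC Q) := by
  unfold indC
  exact Measurable.ite (measurableSet_cube Q) measurable_const measurable_const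

lemma center_mem_clSet (Q : Cube n) : Q.center ∈ Q.clSet := by
  intro i
  have := Q.side_pos
  constructor <;> simp only [Cube.center] <;> linarith

lemma dist_center_le (Q : Cube n) {x : E n} (hx : x ∈ Q.set) :
    dist Q.center x ≤ Q.side / 2 := by
  have hs := Q.side_pos
  refine (dist_pi_le_iff (by linarith)).2 fun i => ?_
  have h1 := (hx i).1
  have h2 := (hx i).2
  rw [Real.dist_eq, abs_le]
  constructor <;> simp only [Cube.center] <;> linarith

end Helpers4

/-- kernel bound for the error terms: if `K' ⊂ J`, `ℓ(J) ≥ 4 ℓ(K')`,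
`d(K', ℝⁿ∖J) ≥ ℓ(K')^{1/2} ℓ(J)^{1/2}`, `s` is supported outside `J` with
`|s| ≤ |J|^{-1/2}` a.e., and `h_{K'}` is a cancellative Haar function, then
`|∭ (K(x,y,z) − K(c_{K'},y,z)) s(y) 1_J(z) h_{K'}(x)| ≤ C(n,α) C_K |K'|^{1/2} |J|^{-1/2} (ℓ(K')/ℓ(J))^{α/2}`,
the triple integral converging absolutely. -/
theorem error_term_kernel_bound (n : ℕ) (hn : 0 < n)
    (α : ℝ) (hα : α ∈ Set.Ioc (0 : ℝ) 1) :
    ∃ C : ℝ, 0 < C ∧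
      ∀ (K : E n → E n → E n → ℂ) (CK : ℝ), CZBounds n α K CK →
      ∀ (J K' : Cube n), K'.set ⊆ J.set → 4 * K'.side ≤ J.side →
        K'.side ^ ((1 : ℝ) / 2) * J.side ^ ((1 : ℝ) / 2) ≤ setDist K'.clSet (J.set)ᶜ →
      ∀ s : E n → ℂ, Measurable s → Function.support s ⊆ (J.set)ᶜ →
        (∀ᵐ x ∂(volume : Measure (E n)), ‖s x‖ ≤ (Real.sqrt J.vol)⁻¹) →
      ∀ η : Fin n → Bool, η ≠ (fun _ => false) →
        Integrable (fun t : E n × E n × E n =>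
          (K t.1 t.2.1 t.2.2 - K K'.center t.2.1 t.2.2) * s t.2.1 * indC J t.2.2 *
            ((haar K' η t.1 : ℝ) : ℂ)) volume ∧
        ‖∫ t : E n × E n × E n,
            (K t.1 t.2.1 t.2.2 - K K'.center t.2.1 t.2.2) * s t.2.1 * indC J t.2.2 *
              ((haar K' η t.1 : ℝ) : ℂ)‖ ≤
          C * CK * Real.sqrt K'.vol * (Real.sqrt J.vol)⁻¹ *
            (K'.side / J.side) ^ (α / 2) := by
  obtain ⟨hα0, hα1⟩ := hα
  have hn0 : (0:ℝ) ≤ (n:ℝ) := Nat.cast_nonneg n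
  set A : ℝ := ∫ w : E n, (1 + ‖w‖) ^ (-(2*(n:ℝ)+α)) with hAdef
  set B : ℝ := ∫ u : E n, (if (1:ℝ) ≤ ‖u‖ then ‖u‖ ^ (-((n:ℝ)+α)) else 0) with hBdef
  have hA0 : 0 ≤ A :=
    integral_nonneg fun w => Real.rpow_nonneg (by positivity) _
  have hB0 : 0 ≤ B := by
    refine integral_nonneg fun u => ?_
    dsimp only
    split_ifs
    · exact Real.rpow_nonneg (norm_nonneg _) _
    · exact le_refl 0
  refine ⟨A * B + 1, by nlinarith, ?_⟩
  intro K CK hCZ J K' hsub hside hdist s hs_meas hs_supp hs_bd η hη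
  have hl' : 0 < K'.side := K'.side_pos
  have hl : 0 < J.side := J.side_pos
  have hCK : 0 ≤ CK := by
    set x0 : E n := fun _ => 0 with hx0
    set y0 : E n := fun _ => 1 with hy0
    have hne : x0 ≠ y0 := by
      intro h
      have := congrFun h ⟨0, hn⟩
      simp [hx0, hy0] at this
    have hb := hCZ.2.1 x0 y0 y0 (fun h => hne h.1)
    have hd : 0 < dist x0 y0 := dist_pos.2 hne
    have hden : 0 < (dist x0 y0 + dist x0 y0) ^ (2*n) := by positivity
    have h0 : 0 ≤ CK / ((dist x0 y0 + dist x0 y0) ^ (2*n)) :=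
      le_trans (norm_nonneg _) hb
    rcases div_nonneg_iff.mp h0 with ⟨h1, -⟩ | ⟨-, h2⟩
    · exact h1
    · linarith
  set c₀ : ℝ := (Real.sqrt J.vol)⁻¹ with hc₀def
  have hc₀ : 0 ≤ c₀ := inv_nonneg.2 (Real.sqrt_nonneg _)
  set D : ℝ := setDist K'.clSet (J.set)ᶜ with hDdef
  have hll : K'.side ^ ((1:ℝ)/2) * K'.side ^ ((1:ℝ)/2) = K'.side := by
    rw [← Real.rpow_add hl']; norm_num
  have h4half : ((4:ℝ) * K'.side) ^ ((1:ℝ)/2) = 2 * K'.side ^ ((1:ℝ)/2) := by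
    rw [Real.mul_rpow (by norm_num) hl'.le]
    congr 1
    rw [show (4:ℝ) = 2^(2:ℕ) by norm_num, ← Real.rpow_natCast 2 2,
      ← Real.rpow_mul (by norm_num : (0:ℝ) ≤ 2)]
    norm_num
  have hl12 : 2 * K'.side ^ ((1:ℝ)/2) ≤ J.side ^ ((1:ℝ)/2) := by
    rw [← h4half]
    exact Real.rpow_le_rpow (by positivity) hside (by norm_num)
  have h2l'D : 2 * K'.side ≤ D := by
    have hstep : K'.side ^ ((1:ℝ)/2) * (2 * K'.side ^ ((1:ℝ)/2)) = 2 * K'.side := by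
      linear_combination 2 * hll
    calc 2 * K'.side = K'.side ^ ((1:ℝ)/2) * (2 * K'.side ^ ((1:ℝ)/2)) := hstep.symm
      _ ≤ K'.side ^ ((1:ℝ)/2) * J.side ^ ((1:ℝ)/2) :=
          mul_le_mul_of_nonneg_left hl12 (Real.rpow_nonneg hl'.le _)
      _ ≤ D := hdist
  have hD0 : 0 < D := lt_of_lt_of_le (by linarith) h2l'D
  have hcy : ∀ y : E n, y ∉ J.set → D ≤ dist K'.center y := by
    intro y hy
    refine csInf_le ⟨0, fun r hr => ?_⟩ ?_
    · obtain ⟨a, -, b, -, rfl⟩ := hr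
      exact dist_nonneg
    · exact Set.mem_image2_of_mem (center_mem_clSet K') hy
  have hKdiff : ∀ x, x ∈ K'.set → ∀ y, y ∉ J.set → ∀ z,
      ‖K x y z - K K'.center y z‖ ≤ CK * K'.side ^ α *
        ((dist K'.center y + dist K'.center z) ^ (-(2*(n:ℝ)+α))) := by
    intro x hx y hy z
    have hdcy : D ≤ dist K'.center y := hcy y hy
    have hdcx : dist K'.center x ≤ K'.side / 2 := dist_center_le K' hx
    have hxy : dist K'.center x ≤ max (dist K'.center y) (dist K'.center z) / 2 := by
      have h2 : dist K'.center y ≤ max (dist K'.center y) (dist K'.center z) :=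
        le_max_left _ _
      linarith
    have hne1 : ¬(K'.center = y ∧ y = z) := by
      rintro ⟨h1, -⟩
      rw [h1] at hdcy
      simp only [dist_self] at hdcy
      linarith
    have hne2 : ¬(x = y ∧ y = z) := by
      rintro ⟨h1, -⟩
      rw [← h1] at hdcy
      linarith
    have hb := hCZ.2.2.1 K'.center x y z hne1 hne2 hxy
    rw [norm_sub_rev] at hb
    refine le_trans hb ?_
    have hbase : 0 < dist K'.center y + dist K'.center z := by
      have h := dist_nonneg (x := K'.center) (y := z)
      linarith
    rw [div_eq_mul_inv, ← Real.rpow_neg hbase.le]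
    have hnum : dist K'.center x ^ α ≤ K'.side ^ α :=
      Real.rpow_le_rpow dist_nonneg (by linarith) hα0.le
    exact mul_le_mul_of_nonneg_right (mul_le_mul_of_nonneg_left hnum hCK)
      (Real.rpow_nonneg hbase.le _)
  set M : ℝ := (K'.side ^ (-(1:ℝ)/2)) ^ n with hMdef
  have hM0 : 0 ≤ M := pow_nonneg (Real.rpow_nonneg hl'.le _) n
  set G : E n × E n × E n → ℝ := fun t =>
    (CK * K'.side ^ α * c₀) * (Set.indicator K'.set (fun _ => M) t.1 *
      (if D ≤ dist K'.center t.2.1 then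
        (dist K'.center t.2.1 + dist K'.center t.2.2) ^ (-(2*(n:ℝ)+α)) else 0)) with hGdef
  have hG0 : ∀ t, 0 ≤ G t := by
    intro t
    rw [hGdef]
    dsimp only
    have h1 : 0 ≤ CK * K'.side ^ α * c₀ :=
      mul_nonneg (mul_nonneg hCK (Real.rpow_nonneg hl'.le _)) hc₀
    refine mul_nonneg h1 (mul_nonneg (Set.indicator_nonneg (fun _ _ => hM0) _) ?_)
    split_ifs
    · exact Real.rpow_nonneg (by positivity) _
    · exact le_refl 0
  obtain ⟨hψ_int, hψ_val⟩ := psi_lemma hα0 hn K'.center hD0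
  have hH_int : Integrable (fun x : E n => Set.indicator K'.set (fun _ => M) x) := by
    rw [integrable_indicator_iff (measurableSet_cube K')]
    exact integrableOn_const (by rw [volume_cube]; exact ENNReal.ofReal_ne_top)
  have hG_int : Integrable G := by
    rw [hGdef]
    have h1 : Integrable (fun t : E n × E n × E n =>
        Set.indicator K'.set (fun _ => M) t.1 *
        (if D ≤ dist K'.center t.2.1 then
          (dist K'.center t.2.1 + dist K'.center t.2.2) ^ (-(2*(n:ℝ)+α)) else 0)) := by
      rw [Measure.volume_eq_prod]
      exact Integrable.mul_prod hH_int hψ_int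
    exact h1.const_mul _
  have hmeasf : Measurable (fun t : E n × E n × E n =>
      (K t.1 t.2.1 t.2.2 - K K'.center t.2.1 t.2.2) * s t.2.1 * indC J t.2.2 *
        ((haar K' η t.1 : ℝ) : ℂ)) := by
    have hKm := hCZ.1
    refine Measurable.mul (Measurable.mul (Measurable.mul ?_ ?_) ?_) ?_
    · exact hKm.sub (hKm.comp (measurable_const.prodMk measurable_snd))
    · exact hs_meas.comp (measurable_fst.comp measurable_snd)
    · exact (measurable_indC J).comp (measurable_snd.comp measurable_snd)
    · exact Complex.measurable_ofReal.comp ((measurable_haar K' η).comp measurable_fst)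
  have hae : ∀ᵐ t : E n × E n × E n ∂volume,
      ‖(K t.1 t.2.1 t.2.2 - K K'.center t.2.1 t.2.2) * s t.2.1 * indC J t.2.2 *
        ((haar K' η t.1 : ℝ) : ℂ)‖ ≤ G t := by
    set N : Set (E n) := toMeasurable volume {x : E n | ¬ ‖s x‖ ≤ c₀} with hNdef
    have hN : volume N = 0 := by
      rw [hNdef, measure_toMeasurable]
      exact ae_iff.mp hs_bd
    have hkey : ∀ᵐ t : E n × E n × E n ∂volume, t.2.1 ∉ N := by
      rw [ae_iff]
      have hset : {t : E n × E n × E n | ¬ t.2.1 ∉ N} =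
          (Set.univ : Set (E n)) ×ˢ (N ×ˢ (Set.univ : Set (E n))) := by
        ext t
        simp [not_not]
      rw [hset, Measure.volume_eq_prod, Measure.prod_prod, Measure.volume_eq_prod,
        Measure.prod_prod, hN]
      simp
    filter_upwards [hkey] with t ht
    obtain ⟨x, y, z⟩ := t
    dsimp only at ht ⊢
    by_cases hx : x ∈ K'.set
    · by_cases hy : y ∈ J.set
      · have hsy : s y = 0 := by
          by_contra h
          exact hs_supp (Function.mem_support.mpr h) hy
        rw [hsy]
        simpa using hG0 (x, y, z)
      · have hdcy : D ≤ dist K'.center y := hcy y hy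
        have hs' : ‖s y‖ ≤ c₀ := by
          by_contra h
          exact ht (subset_toMeasurable _ _ h)
        have hind : ‖indC J z‖ ≤ 1 := by
          unfold indC
          split_ifs <;> simp
        have hhaar : ‖((haar K' η x : ℝ) : ℂ)‖ ≤ M := by
          rw [Complex.norm_real, Real.norm_eq_abs]
          have h := abs_haar_le K' η x
          rwa [Set.indicator_of_mem hx] at h
        have hK' := hKdiff x hx y hy z
        have hbase0 : (0:ℝ) ≤ (dist K'.center y + dist K'.center z) ^ (-(2*(n:ℝ)+α)) :=
          Real.rpow_nonneg (by positivity) _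
        have hb1 : 0 ≤ CK * K'.side ^ α *
            ((dist K'.center y + dist K'.center z) ^ (-(2*(n:ℝ)+α))) :=
          mul_nonneg (mul_nonneg hCK (Real.rpow_nonneg hl'.le _)) hbase0
        calc ‖(K x y z - K K'.center y z) * s y * indC J z * ((haar K' η x : ℝ) : ℂ)‖
            = ‖K x y z - K K'.center y z‖ * ‖s y‖ * ‖indC J z‖ *
                ‖((haar K' η x : ℝ) : ℂ)‖ := by
              rw [norm_mul, norm_mul, norm_mul]
          _ ≤ (CK * K'.side ^ α *
                ((dist K'.center y + dist K'.center z) ^ (-(2*(n:ℝ)+α)))) * c₀ * 1 * M := by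
              refine mul_le_mul (mul_le_mul (mul_le_mul hK' hs' (norm_nonneg _) hb1)
                hind (norm_nonneg _) ?_) hhaar (norm_nonneg _) ?_
              · exact mul_nonneg hb1 hc₀
              · exact mul_nonneg (mul_nonneg hb1 hc₀) zero_le_one
          _ = G (x, y, z) := by
              rw [hGdef]
              dsimp only
              rw [Set.indicator_of_mem hx, if_pos hdcy]
              ring
    · rw [haar_eq_zero_of_not_mem K' η hx]
      simpa using hG0 (x, y, z)
  have hint : Integrable (fun t : E n × E n × E n =>
      (K t.1 t.2.1 t.2.2 - K K'.center t.2.1 t.2.2) * s t.2.1 * indC J t.2.2 *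
        ((haar K' η t.1 : ℝ) : ℂ)) volume :=
    hG_int.mono' hmeasf.aestronglyMeasurable hae
  refine ⟨hint, ?_⟩
  have hvol0 : 0 ≤ K'.vol := pow_nonneg hl'.le n
  have hHval : ∫ x : E n, Set.indicator K'.set (fun _ => M) x = M * K'.vol := by
    rw [integral_indicator_const M (measurableSet_cube K'), measureReal_def, volume_cube,
      ENNReal.toReal_ofReal hvol0, smul_eq_mul, mul_comm]
  have hψ_val2 : (∫ yz : E n × E n,
      (if D ≤ dist K'.center yz.1 then
        (dist K'.center yz.1 + dist K'.center yz.2) ^ (-(2*(n:ℝ)+α)) else 0)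
      ∂((volume : Measure (E n)).prod volume))
      = D ^ (-α) * (A * B) := by
    rw [← Measure.volume_eq_prod]
    exact hψ_val
  have hGval : ∫ t, G t = (CK * K'.side ^ α * c₀) * ((M * K'.vol) * (D ^ (-α) * (A * B))) := by
    have hfg := integral_prod_mul (μ := (volume : Measure (E n)))
        (ν := (volume : Measure (E n × E n)))
        (fun x : E n => Set.indicator K'.set (fun _ => M) x)
        (fun yz : E n × E n => if D ≤ dist K'.center yz.1 then
          (dist K'.center yz.1 + dist K'.center yz.2) ^ (-(2*(n:ℝ)+α)) else 0)
    simp only [hGdef]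
    rw [MeasureTheory.integral_const_mul, Measure.volume_eq_prod, hfg, hψ_val, hHval]
  have hsqM : M * K'.vol = Real.sqrt K'.vol := by
    rw [hMdef, Cube.vol, ← mul_pow]
    have h1 : K'.side ^ (-(1:ℝ)/2) * K'.side = K'.side ^ ((1:ℝ)/2) := by
      nth_rewrite 2 [← Real.rpow_one K'.side]
      rw [← Real.rpow_add hl']
      norm_num
    have h2 : (K'.side ^ ((1:ℝ)/2)) ^ n = K'.side ^ ((n:ℝ)/2) := by
      rw [← Real.rpow_natCast (K'.side ^ ((1:ℝ)/2)) n, ← Real.rpow_mul hl'.le]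
      congr 1
      ring
    have h3 : Real.sqrt (K'.side ^ n) = K'.side ^ ((n:ℝ)/2) := by
      rw [Real.sqrt_eq_rpow, ← Real.rpow_natCast K'.side n, ← Real.rpow_mul hl'.le]
      congr 1
      ring
    rw [h1, h2, h3]
  have hvD : D ^ (-α) ≤ (K'.side ^ ((1:ℝ)/2) * J.side ^ ((1:ℝ)/2)) ^ (-α) :=
    Real.rpow_le_rpow_of_nonpos (by positivity) hdist (by linarith)
  have hcomb : K'.side ^ α * D ^ (-α) ≤ (K'.side / J.side) ^ (α/2) := by
    have h1 : K'.side ^ α * (K'.side ^ ((1:ℝ)/2) * J.side ^ ((1:ℝ)/2)) ^ (-α)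
        = (K'.side / J.side) ^ (α/2) := by
      have e1 : (K'.side ^ ((1:ℝ)/2) * J.side ^ ((1:ℝ)/2)) ^ (-α)
          = K'.side ^ (-(α/2)) * J.side ^ (-(α/2)) := by
        rw [Real.mul_rpow (Real.rpow_nonneg hl'.le _) (Real.rpow_nonneg hl.le _),
          ← Real.rpow_mul hl'.le, ← Real.rpow_mul hl.le]
        congr 1
        · congr 1
          ring
        · congr 1
          ring
      have e2 : (K'.side / J.side) ^ (α/2) = K'.side ^ (α/2) * (J.side ^ (α/2))⁻¹ := by
        rw [Real.div_rpow hl'.le hl.le]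
        exact div_eq_mul_inv _ _
      rw [e1, e2, ← mul_assoc, ← Real.rpow_add hl', Real.rpow_neg hl.le (α/2)]
      congr 1
      congr 1
      ring
    rw [← h1]
    exact mul_le_mul_of_nonneg_left hvD (Real.rpow_nonneg hl'.le _)
  have hS0 : 0 ≤ (K'.side / J.side) ^ (α/2) := Real.rpow_nonneg (by positivity) _
  have hR0 : 0 ≤ CK * c₀ * Real.sqrt K'.vol := by positivity
  calc ‖∫ t : E n × E n × E n,
        (K t.1 t.2.1 t.2.2 - K K'.center t.2.1 t.2.2) * s t.2.1 * indC J t.2.2 *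
          ((haar K' η t.1 : ℝ) : ℂ)‖
      ≤ ∫ t, G t :=
        le_trans (norm_integral_le_integral_norm _) (integral_mono_ae hint.norm hG_int hae)
    _ = (CK * c₀ * Real.sqrt K'.vol * (A * B)) * (K'.side ^ α * D ^ (-α)) := by
        rw [hGval, hsqM]
        ring
    _ ≤ (CK * c₀ * Real.sqrt K'.vol * (A * B)) * (K'.side / J.side) ^ (α/2) := by
        refine mul_le_mul_of_nonneg_left hcomb ?_
        exact mul_nonneg hR0 (mul_nonneg hA0 hB0)
    _ ≤ (A * B + 1) * CK * Real.sqrt K'.vol * c₀ * (K'.side / J.side) ^ (α/2) := by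
        refine mul_le_mul_of_nonneg_right ?_ hS0
        have : CK * c₀ * Real.sqrt K'.vol * (A * B) ≤
            CK * c₀ * Real.sqrt K'.vol * (A * B + 1) := by
          refine mul_le_mul_of_nonneg_left (by linarith) hR0
        linarith [this]


end Bilinear
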